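/- Let G be a non-trivial game on n binary players with 0 < π(G) < π̂(G), where π̂(G) is the empirical proportion of equilibria from a dataset of m ≥ 1 samples, and set q̂ = min(π̂(G), 1 − 1/(2m)). Then the average log-likelihood satisfies L̂(G, q̂) > −π̂(G)·log π(G) − KL(π̂(G)‖q̂) − (n+1)·log 2, where moreover KL(π̂(G)‖q̂) = 0 if π̂(G) < 1, and KL(π̂(G)‖q̂) = −log(1 − 1/(2m)) ≤ log 2 if π̂(G) = 1. -/

import Mathlib

open Finset
open scoped Classical BigOperators

/-- The hypercube `{-1,+1}^n` of joint actions, as a finite set of real vectors. -/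
noncomputable def cube (n : ℕ) : Finset (Fin n → ℝ) :=
  (Finset.univ : Finset (Fin n → Bool)).image (fun s i => if s i then (1 : ℝ) else -1)

/-- The generative-model PMF `p_{(N,q)}(x) = q·1[x∈N]/|N| + (1−q)·1[x∉N]/(2^n − |N|)`. -/
noncomputable def gpmf (n : ℕ) (N : Finset (Fin n → ℝ)) (q : ℝ) (x : Fin n → ℝ) : ℝ :=
  q * (if x ∈ N then 1 else 0) / (N.card : ℝ) +
    (1 - q) * (if x ∉ N then 1 else 0) / ((2 : ℝ) ^ n - (N.card : ℝ))

/-- KL divergence between Bernoulli distributions. -/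
noncomputable def klBer (p1 p2 : ℝ) : ℝ :=
  p1 * Real.log (p1 / p2) + (1 - p1) * Real.log ((1 - p1) / (1 - p2))

/-- Empirical proportion of equilibria `π̂(G) = (1/m) ∑_l 1[x^{(l)} ∈ NE(G)]`. -/
noncomputable def piHat (n m : ℕ) (N : Finset (Fin n → ℝ)) (xs : Fin m → Fin n → ℝ) : ℝ :=
  (1 / (m : ℝ)) * ∑ l, (if xs l ∈ N then 1 else 0)

/-- Average log-likelihood `L̂(G,q) = (1/m) ∑_l log p_{(G,q)}(x^{(l)})`. -/
noncomputable def avgLL (n m : ℕ) (N : Finset (Fin n → ℝ)) (q : ℝ)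
    (xs : Fin m → Fin n → ℝ) : ℝ :=
  (1 / (m : ℝ)) * ∑ l, Real.log (gpmf n N q (xs l))

lemma key_log (p : ℝ) (hp : 0 < p) : p - 1/2 - p * Real.log 2 ≤ p * Real.log p := by
  have h1 : Real.log (1/(2*p)) ≤ 1/(2*p) - 1 := Real.log_le_sub_one_of_pos (by positivity)
  have h2 : Real.log (1/(2*p)) = -(Real.log 2 + Real.log p) := by
    rw [one_div, Real.log_inv, Real.log_mul two_ne_zero hp.ne']
  have h3 : p * (1/(2*p)) = 1/2 := by field_simp
  nlinarith [mul_le_mul_of_nonneg_left h1 hp.le, h3]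

set_option maxHeartbeats 1000000 in
/-- for a non-trivial game with `0 < π(G) < π̂(G)` and
`q̂ = min(π̂(G), 1 − 1/(2m))`, the average log-likelihood satisfies
`L̂(G,q̂) > −π̂ log π − KL(π̂‖q̂) − (n+1) log 2`, where `KL(π̂‖q̂) = 0` if `π̂ < 1` and
`KL(π̂‖q̂) = −log(1 − 1/(2m)) ≤ log 2` if `π̂ = 1`. -/
theorem stmt9 (n m : ℕ) (hm : 1 ≤ m) (N : Finset (Fin n → ℝ)) (hsub : N ⊆ cube n)
    (xs : Fin m → Fin n → ℝ) (hxs : ∀ l, xs l ∈ cube n)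
    (hpos : 0 < (N.card : ℝ) / 2 ^ n)
    (hlt : (N.card : ℝ) / 2 ^ n < piHat n m N xs) :
    (avgLL n m N (min (piHat n m N xs) (1 - 1 / (2 * (m : ℝ)))) xs >
      -piHat n m N xs * Real.log ((N.card : ℝ) / 2 ^ n) -
        klBer (piHat n m N xs) (min (piHat n m N xs) (1 - 1 / (2 * (m : ℝ)))) -
        ((n : ℝ) + 1) * Real.log 2) ∧
    (piHat n m N xs < 1 →
      klBer (piHat n m N xs) (min (piHat n m N xs) (1 - 1 / (2 * (m : ℝ)))) = 0) ∧
    (piHat n m N xs = 1 →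
      klBer (piHat n m N xs) (min (piHat n m N xs) (1 - 1 / (2 * (m : ℝ)))) =
          -Real.log (1 - 1 / (2 * (m : ℝ))) ∧
        -Real.log (1 - 1 / (2 * (m : ℝ))) ≤ Real.log 2) := by
  have hm0 : (0:ℝ) < m := by exact_mod_cast Nat.lt_of_lt_of_le Nat.zero_lt_one hm
  have hm1 : (1:ℝ) ≤ m := by exact_mod_cast hm
  have h2n : (0:ℝ) < 2 ^ n := by positivity
  set pG : ℝ := (N.card : ℝ) / 2 ^ n with hpGdef
  set ph := piHat n m N xs with hphdef
  set qh := min ph (1 - 1 / (2 * (m:ℝ))) with hqhdef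
  have hSk : (∑ l, (if xs l ∈ N then (1:ℝ) else 0))
      = ((Finset.univ.filter (fun l : Fin m => xs l ∈ N)).card : ℝ) := by
    rw [Finset.sum_boole]
  set k := (Finset.univ.filter (fun l : Fin m => xs l ∈ N)).card with hkdef
  have hkm : k ≤ m := by
    calc k ≤ (Finset.univ : Finset (Fin m)).card := Finset.card_filter_le _ _
    _ = m := by simp
  have hphk : ph = (k:ℝ) / m := by
    rw [hphdef]; unfold piHat; rw [hSk]; ring
  have hphle1 : ph ≤ 1 := by
    rw [hphk, div_le_one hm0]; exact_mod_cast hkm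
  have hphpos : 0 < ph := hpos.trans hlt
  have hpG1 : pG < 1 := lt_of_lt_of_le hlt hphle1
  have hNc : 0 < (N.card:ℝ) := by
    have h := mul_pos hpos h2n
    rwa [div_mul_cancel₀ _ h2n.ne'] at h
  have hNclt : (N.card:ℝ) < 2^n := (div_lt_one h2n).mp hpG1
  have hD : (0:ℝ) < 2^n - N.card := by linarith
  have hhalf : 1/(2*(m:ℝ)) ≤ 1/2 := by
    apply one_div_le_one_div_of_le two_pos; linarith
  have hinvpos : (0:ℝ) < 1/(2*(m:ℝ)) := by positivity
  have hqpos : 0 < qh := lt_min hphpos (by linarith)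
  have hqle : qh ≤ 1 - 1/(2*(m:ℝ)) := min_le_right _ _
  have h1q : (0:ℝ) < 1 - qh := by linarith
  -- average log-likelihood formula
  have hgl : ∀ l : Fin m, Real.log (gpmf n N qh (xs l)) =
      (if xs l ∈ N then (1:ℝ) else 0) * Real.log (qh / (N.card:ℝ))
      + (1 - (if xs l ∈ N then (1:ℝ) else 0)) * Real.log ((1 - qh) / ((2:ℝ)^n - (N.card:ℝ))) := by
    intro l
    by_cases h : xs l ∈ N <;> simp [gpmf, h]
  have hsumeq : (∑ l, Real.log (gpmf n N qh (xs l))) =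
      (k:ℝ) * Real.log (qh / (N.card:ℝ))
      + ((m:ℝ) - k) * Real.log ((1 - qh) / ((2:ℝ)^n - (N.card:ℝ))) := by
    rw [Finset.sum_congr rfl (fun l _ => hgl l), Finset.sum_add_distrib,
      ← Finset.sum_mul, ← Finset.sum_mul, hSk, Finset.sum_sub_distrib,
      Finset.sum_const, Finset.card_univ, Fintype.card_fin, hSk, nsmul_eq_mul, mul_one]
  have havg : avgLL n m N qh xs =
      ph * Real.log (qh / (N.card:ℝ))
      + (1 - ph) * Real.log ((1 - qh) / ((2:ℝ)^n - (N.card:ℝ))) := by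
    unfold avgLL
    rw [hsumeq, hphk]
    field_simp
  have hA : Real.log (qh / (N.card:ℝ)) = Real.log qh - (Real.log pG + n * Real.log 2) := by
    rw [Real.log_div hqpos.ne' hNc.ne']
    have h : Real.log ((N.card:ℝ)) = Real.log pG + n * Real.log 2 := by
      rw [hpGdef, Real.log_div hNc.ne' h2n.ne', Real.log_pow]; ring
    rw [h]
  have hB : Real.log ((1 - qh) / ((2:ℝ)^n - (N.card:ℝ)))
      = Real.log (1 - qh) - (Real.log (1 - pG) + n * Real.log 2) := by
    rw [Real.log_div h1q.ne' hD.ne']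
    have h1p : (1:ℝ) - pG = ((2:ℝ)^n - (N.card:ℝ))/2^n := by
      rw [hpGdef]; field_simp
    have h : Real.log ((2:ℝ)^n - (N.card:ℝ)) = Real.log (1 - pG) + n * Real.log 2 := by
      rw [h1p, Real.log_div hD.ne' h2n.ne', Real.log_pow]; ring
    rw [h]
  -- q̂ = π̂ when π̂ < 1
  have hple : ph < 1 → ph ≤ 1 - 1/(2*(m:ℝ)) := by
    intro h1
    have hkm' : k < m := by
      by_contra hc
      push_neg at hc
      have hkm2 : k = m := le_antisymm hkm hc
      rw [hphk, hkm2, div_self hm0.ne'] at h1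
      exact lt_irrefl 1 h1
    have hk1 : (k:ℝ) + 1 ≤ m := by exact_mod_cast hkm'
    rw [hphk, div_le_iff₀ hm0]
    have hm2 : (m:ℝ) * (1/(2*m)) = 1/2 := by field_simp
    nlinarith
  have hkl_lt : ph < 1 → klBer ph qh = 0 := by
    intro h1
    have hq : qh = ph := min_eq_left (hple h1)
    rw [hq]
    unfold klBer
    rw [div_self hphpos.ne', div_self (by linarith : (1:ℝ) - ph ≠ 0), Real.log_one]
    ring
  have hkl_eq : ph = 1 → klBer ph qh = -Real.log (1 - 1/(2*(m:ℝ))) := by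
    intro h1
    have hq : qh = 1 - 1/(2*(m:ℝ)) := by
      rw [hqhdef, h1]; exact min_eq_right (by linarith)
    unfold klBer
    rw [hq, h1]
    norm_num
  have hlast : -Real.log (1 - 1/(2*(m:ℝ))) ≤ Real.log 2 := by
    have h12 : (1:ℝ)/2 ≤ 1 - 1/(2*m) := by linarith
    have hlog := Real.log_le_log (by norm_num : (0:ℝ) < 1/2) h12
    have hhv : Real.log ((1:ℝ)/2) = -Real.log 2 := by
      rw [one_div, Real.log_inv]
    linarith [hlog, hhv.symm.le, hhv.le]
  refine ⟨?_, hkl_lt, fun h1 => ⟨hkl_eq h1, hlast⟩⟩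
  rcases lt_or_eq_of_le hphle1 with h1 | h1
  · have hq : qh = ph := min_eq_left (hple h1)
    rw [havg, hA, hB, hkl_lt h1, hq]
    have hlogneg : Real.log (1 - pG) < 0 := Real.log_neg (by linarith) (by linarith)
    have hstrict : (1 - ph) * Real.log (1 - pG) < 0 :=
      mul_neg_of_pos_of_neg (by linarith) hlogneg
    nlinarith [key_log ph hphpos, key_log (1 - ph) (by linarith : (0:ℝ) < 1 - ph), hstrict]
  · have hq : qh = 1 - 1/(2*(m:ℝ)) := by
      rw [hqhdef, h1]; exact min_eq_right (by linarith)
    rw [havg, hA, hB, hkl_eq h1, h1, hq]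
    have hl2 := Real.log_pos (by norm_num : (1:ℝ) < 2)
    nlinarith [hl2]
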